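/- Let X ⊆ ℝ^d be a bounded set (not necessarily closed), and let ρ be a Borel probability measure on ℝ^d concentrated on X (ρ(X) = 1, or equivalently the complement of X is ρ-null). Then the barycenter x* = ∫ x dρ(x) can be written as a convex combination of at most d+1 points of X: there exist k ≤ d+1 points x_1, …, x_k ∈ X and weights w_1, …, w_k ≥ 0 with Σ_i w_i = 1 such that x* = Σ_i w_i x_i. In particular the barycenter lies in the convex hull of X (not merely in its closure). -/

import Mathlib

open MeasureTheory Bornology Module

private lemma bary_mem_convexHull : ∀ (n : ℕ) (E : Type) [NormedAddCommGroup E]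
    [InnerProductSpace ℝ E] [FiniteDimensional ℝ E] [MeasurableSpace E] [BorelSpace E],
    finrank ℝ E ≤ n → ∀ (μ : Measure E) [IsProbabilityMeasure μ] (s : Set E),
    MeasurableSet s → IsBounded s → μ sᶜ = 0 → (∫ y, y ∂μ) ∈ convexHull ℝ s := by
  intro n
  induction n with
  | zero =>
    intro E _ _ _ _ _ hrank μ _ s _ _ hμs
    have hsub : Subsingleton E := finrank_zero_iff.mp (Nat.le_zero.mp hrank)
    have hsne : s.Nonempty := by
      rcases Set.eq_empty_or_nonempty s with h | h
      · exfalso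
        rw [h, Set.compl_empty] at hμs
        have h1 : (μ Set.univ) = 1 := measure_univ
        rw [hμs] at h1
        exact zero_ne_one h1
      · exact h
    obtain ⟨x, hx⟩ := hsne
    have hxe : (∫ y, y ∂μ) = x := Subsingleton.elim _ _
    rw [hxe]
    exact subset_convexHull ℝ s hx
  | succ n IH =>
    intro E _ _ _ _ _ hrank μ _ s hsm hsb hμs
    classical
    have hsne : s.Nonempty := by
      rcases Set.eq_empty_or_nonempty s with h | h
      · exfalso
        rw [h, Set.compl_empty] at hμs
        have h1 : (μ Set.univ) = 1 := measure_univ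
        rw [hμs] at h1
        exact zero_ne_one h1
      · exact h
    obtain ⟨R, hR⟩ := isBounded_iff_forall_norm_le.mp hsb
    have haes : ∀ᵐ y ∂μ, y ∈ s :=
      MeasureTheory.ae_iff.mpr (by simpa [Set.compl_def] using hμs)
    have hint : Integrable (fun y : E => y) μ :=
      Integrable.mono' (integrable_const R) aestronglyMeasurable_id
        (haes.mono fun y hy => hR y hy)
    set b := ∫ y, y ∂μ with hbdef
    by_cases hbC : b ∈ convexHull ℝ s
    · exact hbC
    have hbcl : b ∈ closure (convexHull ℝ s) :=
      Convex.integral_mem ((convex_convexHull ℝ s).closure) isClosed_closure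
        (haes.mono fun y hy => subset_closure (subset_convexHull ℝ s hy)) hint
    -- In either case we find a nonzero functional constant a.e.
    obtain ⟨f, hf0, hfae⟩ : ∃ f : E →L[ℝ] ℝ, f ≠ 0 ∧ ∀ᵐ y ∂μ, f y = f b := by
      by_cases hi : (interior (convexHull ℝ s)).Nonempty
      · obtain ⟨f, hf⟩ := geometric_hahn_banach_open_point
          ((convex_convexHull ℝ s).interior) isOpen_interior
          (fun h => hbC (interior_subset h))
        obtain ⟨a, ha⟩ := hi
        have hf0 : f ≠ 0 := by
          intro h
          have h2 := hf a ha
          rw [h] at h2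
          simp at h2
        have hle : ∀ y ∈ convexHull ℝ s, f y ≤ f b := by
          intro y hy
          have key : ∀ t ∈ Set.Ioc (0:ℝ) 1, (1 - t) * f y + t * f a ≤ f b := by
            intro t ht
            have hz : (1 - t) • y + t • a ∈ interior (convexHull ℝ s) :=
              Convex.combo_closure_interior_mem_interior (convex_convexHull ℝ s)
                (subset_closure hy) ha (by linarith [ht.2]) ht.1 (by ring)
            have h3 := (hf _ hz).le
            simpa [map_add, _root_.map_smul, smul_eq_mul] using h3
          have hcont : Filter.Tendsto (fun t : ℝ => (1 - t) * f y + t * f a)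
              (nhdsWithin 0 (Set.Ioi 0)) (nhds (f y)) := by
            have h4 : Filter.Tendsto (fun t : ℝ => (1 - t) * f y + t * f a)
                (nhds 0) (nhds ((1 - 0) * f y + 0 * f a)) := by
              apply Filter.Tendsto.add
              · exact (((continuous_const.sub continuous_id).mul continuous_const).tendsto 0)
              · exact ((continuous_id.mul continuous_const).tendsto 0)
            simpa using h4.mono_left nhdsWithin_le_nhds
          refine le_of_tendsto hcont ?_
          refine Filter.eventually_of_mem (Ioc_mem_nhdsGT_of_mem ?_) key
          exact ⟨le_refl (0:ℝ), zero_lt_one⟩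
        refine ⟨f, hf0, ?_⟩
        have hnn : 0 ≤ᵐ[μ] fun y => f b - f y :=
          haes.mono fun y hy => sub_nonneg.mpr (hle y (subset_convexHull ℝ s hy))
        have hintf : Integrable (fun y => f b - f y) μ :=
          (integrable_const (f b)).sub (f.integrable_comp hint)
        have hzero : ∫ y, (f b - f y) ∂μ = 0 := by
          rw [integral_sub (integrable_const _) (f.integrable_comp hint),
            integral_const, probReal_univ, one_smul,
            f.integral_comp_comm hint]
          simp [hbdef]
        have := (integral_eq_zero_iff_of_nonneg_ae hnn hintf).mp hzero
        exact this.mono fun y hy => by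
          have : f b - f y = 0 := hy
          linarith
      · -- interior empty: s lies in a proper affine subspace
        have hspan : affineSpan ℝ s ≠ ⊤ := by
          intro h
          apply hi
          rw [(convex_convexHull ℝ s).interior_nonempty_iff_affineSpan_eq_top,
            affineSpan_convexHull]
          exact h
        have hAne : (affineSpan ℝ s : Set E).Nonempty := by
          obtain ⟨x, hx⟩ := hsne
          exact ⟨x, subset_affineSpan ℝ s hx⟩
        have hdir : (affineSpan ℝ s).direction ≠ ⊤ := by
          intro h
          exact hspan (AffineSubspace.direction_eq_top_iff_of_nonempty hAne |>.mp h)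
        have horth : ((affineSpan ℝ s).direction)ᗮ ≠ ⊥ := by
          rwa [ne_eq, Submodule.orthogonal_eq_bot_iff]
        obtain ⟨v, hvmem, hv0⟩ := Submodule.exists_mem_ne_zero_of_ne_bot horth
        refine ⟨innerSL ℝ v, ?_, ?_⟩
        · intro h
          apply hv0
          have h2 : (innerSL ℝ v) v = 0 := by rw [h]; rfl
          simpa [inner_self_eq_zero] using h2
        · have hbA : b ∈ affineSpan ℝ s := by
            have h5 : closure (convexHull ℝ s) ⊆ (affineSpan ℝ s : Set E) := by
              apply closure_minimal
              · rw [← affineSpan_convexHull (𝕜 := ℝ) (s := s)]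
                exact subset_affineSpan ℝ _
              · exact (affineSpan ℝ s).closed_of_finiteDimensional
            exact h5 hbcl
          refine haes.mono fun y hy => ?_
          have hyA : y ∈ affineSpan ℝ s := subset_affineSpan ℝ s hy
          have hsubmem : y - b ∈ (affineSpan ℝ s).direction := by
            simpa using AffineSubspace.vsub_mem_direction hyA hbA
          have : (inner ℝ v (y - b) : ℝ) = 0 := by
            rw [real_inner_comm]
            exact (Submodule.mem_orthogonal _ v).mp hvmem _ hsubmem
          have h6 : (innerSL ℝ v) y - (innerSL ℝ v) b = 0 := by
            simpa [inner_sub_right] using this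
          linarith
    -- Pass to the kernel hyperplane
    set V : Submodule ℝ E := LinearMap.ker (f : E →ₗ[ℝ] ℝ) with hVdef
    have hVrank : finrank ℝ V ≤ n := by
      obtain ⟨x, hx⟩ : ∃ x, f x ≠ 0 := by
        by_contra h
        push_neg at h
        exact hf0 (ContinuousLinearMap.ext fun x => by simp [h x])
      have h1 := LinearMap.finrank_range_add_finrank_ker (f : E →ₗ[ℝ] ℝ)
      have h2 : LinearMap.range (f : E →ₗ[ℝ] ℝ) = ⊤ := by
        rw [LinearMap.range_eq_top]
        intro c
        refine ⟨(c / f x) • x, ?_⟩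
        simp only [LinearMap.map_smul, smul_eq_mul, ContinuousLinearMap.coe_coe]
        field_simp
      rw [h2, finrank_top, finrank_self] at h1
      have h3 : finrank ℝ (LinearMap.ker (f : E →ₗ[ℝ] ℝ)) = finrank ℝ V := by
        congr 1
      omega
    set Φ : E → V := fun y => (Submodule.orthogonalProjectionOnto V) (y - b) with hΦdef
    have hΦc : Continuous Φ :=
      (Submodule.orthogonalProjectionOnto V).continuous.comp (continuous_id.sub continuous_const)
    have hΦm : Measurable Φ := hΦc.measurable
    set μ' : Measure V := μ.map Φ with hμ'def
    have : IsProbabilityMeasure μ' := Measure.isProbabilityMeasure_map hΦm.aemeasurable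
    set s' : Set V := (fun v : V => (v : E) + b) ⁻¹' s with hs'def
    have hs'm : MeasurableSet s' :=
      (continuous_subtype_val.add continuous_const).measurable hsm
    have hs'b : IsBounded s' := by
      rw [isBounded_iff_forall_norm_le]
      refine ⟨R + ‖b‖, fun v hv => ?_⟩
      have h1 : ‖(v : E) + b‖ ≤ R := hR _ hv
      calc ‖v‖ = ‖((v : E) + b) - b‖ := by rw [add_sub_cancel_right]; rfl
        _ ≤ ‖(v : E) + b‖ + ‖b‖ := norm_sub_le _ _
        _ ≤ R + ‖b‖ := by linarith
    have haeΦ : ∀ᵐ y ∂μ, ((Φ y : E) = y - b ∧ Φ y ∈ s') := by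
      refine (haes.and hfae).mono fun y hy => ?_
      have hker : y - b ∈ V := by
        rw [hVdef, LinearMap.mem_ker]
        simp only [ContinuousLinearMap.coe_coe, map_sub]
        rw [hy.2]; ring
      have h1 : Φ y = ⟨y - b, hker⟩ := by
        have := Submodule.orthogonalProjectionOnto_mem_subspace_eq_self (K := V) ⟨y - b, hker⟩
        simpa [hΦdef] using this
      constructor
      · rw [h1]
      · rw [hs'def, Set.mem_preimage, h1]
        simpa using hy.1
    have hμ's' : μ' s'ᶜ = 0 := by
      rw [hμ'def, Measure.map_apply hΦm hs'm.compl]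
      have h1 : ∀ᵐ y ∂μ, Φ y ∈ s' := haeΦ.mono fun y hy => hy.2
      rw [MeasureTheory.ae_iff] at h1
      simpa [Set.preimage, Set.compl_def] using h1
    have hbary : (∫ v, v ∂μ') ∈ convexHull ℝ s' := by
      refine IH V hVrank μ' s' hs'm hs'b hμ's'
    have hint' : Integrable (fun v : V => v) μ' := by
      have haes' : ∀ᵐ v ∂μ', v ∈ s' :=
        MeasureTheory.ae_iff.mpr (by simpa [Set.compl_def] using hμ's')
      obtain ⟨R', hR'⟩ := isBounded_iff_forall_norm_le.mp hs'b
      exact Integrable.mono' (integrable_const R') aestronglyMeasurable_id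
        (haes'.mono fun v hv => hR' v hv)
    have hcoe : ((∫ v, v ∂μ' : V) : E) = 0 := by
      have h1 : ((∫ v, v ∂μ' : V) : E) = ∫ v, ((v : V) : E) ∂μ' := by
        have h := V.subtypeL.integral_comp_comm hint'
        simpa using h.symm
      rw [h1, integral_map hΦm.aemeasurable
        (continuous_subtype_val.aestronglyMeasurable)]
      have h2 : ∫ y, ((Φ y : V) : E) ∂μ = ∫ y, (y - b) ∂μ :=
        integral_congr_ae (haeΦ.mono fun y hy => hy.1)
      rw [h2, integral_sub hint (integrable_const b), integral_const,
        probReal_univ, one_smul]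
      simp [hbdef]
    have hzero : (∫ v, v ∂μ' : V) = 0 := by
      exact_mod_cast Subtype.ext hcoe
    rw [hzero] at hbary
    -- map back into E
    let A : V →ᵃ[ℝ] E :=
      { toFun := fun v => (v : E) + b
        linear := V.subtype
        map_vadd' := by
          intro p w
          show ((w + p : V) : E) + b = (w : E) + (((p : V) : E) + b)
          push_cast
          abel }
    have hA0 : A 0 = b := by
      show ((0 : V) : E) + b = b
      simp
    have himg : A '' s' ⊆ s := by
      rintro _ ⟨v, hv, rfl⟩
      exact hv
    have : b ∈ convexHull ℝ (A '' s') := by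
      rw [← AffineMap.image_convexHull]
      exact ⟨0, hbary, hA0⟩
    exact (hbC (convexHull_mono himg this)).elim

/-- **Carathéodory's theorem for barycenters of bounded (not necessarily
closed) sets.** If `X ⊆ ℝ^d` is bounded and `ρ` is a Borel probability measure
concentrated on `X`, then the barycenter `∫ x dρ(x)` is a convex combination of
at most `d + 1` points of `X`; in particular it lies in the convex hull of `X`
(not merely its closure). -/
theorem barycenter_caratheodory
    (d : ℕ) (X : Set (EuclideanSpace ℝ (Fin d)))
    (hX : Bornology.IsBounded X)
    (ρ : Measure (EuclideanSpace ℝ (Fin d))) [IsProbabilityMeasure ρ]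
    (hρ : ρ Xᶜ = 0) :
    ∃ (k : ℕ) (_ : k ≤ d + 1)
      (x : Fin k → EuclideanSpace ℝ (Fin d)) (w : Fin k → ℝ),
      (∀ i, x i ∈ X) ∧ (∀ i, 0 ≤ w i) ∧ (∑ i, w i = 1) ∧
      (∫ y, y ∂ρ) = ∑ i, w i • x i := by
  classical
  set s : Set (EuclideanSpace ℝ (Fin d)) := (toMeasurable ρ Xᶜ)ᶜ with hsdef
  have hsm : MeasurableSet s := (measurableSet_toMeasurable ρ Xᶜ).compl
  have hsX : s ⊆ X := by
    rw [hsdef, Set.compl_subset_comm]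
    simpa using subset_toMeasurable ρ Xᶜ
  have hsb : IsBounded s := hX.subset hsX
  have hρs : ρ sᶜ = 0 := by
    rw [hsdef, compl_compl, measure_toMeasurable]
    exact hρ
  have hmem : (∫ y, y ∂ρ) ∈ convexHull ℝ X := by
    refine convexHull_mono hsX ?_
    exact bary_mem_convexHull d (EuclideanSpace ℝ (Fin d))
      (le_of_eq (finrank_euclideanSpace_fin)) ρ s hsm hsb hρs
  rw [convexHull_eq_union] at hmem
  simp only [Set.mem_iUnion, exists_prop] at hmem
  obtain ⟨t, htX, htind, htmem⟩ := hmem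
  have hcard : t.card ≤ d + 1 := by
    have h1 := htind.card_le_finrank_succ
    rw [Fintype.card_coe] at h1
    calc t.card ≤ finrank ℝ (vectorSpan ℝ (Set.range ((↑) : t → EuclideanSpace ℝ (Fin d)))) + 1 := h1
      _ ≤ finrank ℝ (EuclideanSpace ℝ (Fin d)) + 1 := by
          exact Nat.add_le_add_right (Submodule.finrank_le _) 1
      _ = d + 1 := by rw [finrank_euclideanSpace_fin]
  rw [Finset.convexHull_eq] at htmem
  obtain ⟨w, hw0, hw1, hwc⟩ := htmem
  rw [Finset.centerMass_eq_of_sum_1 _ id hw1] at hwc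
  set e := t.equivFin.symm with hedef
  refine ⟨t.card, hcard, fun i => (e i : EuclideanSpace ℝ (Fin d)), fun i => w (e i), ?_, ?_, ?_, ?_⟩
  · exact fun i => htX (e i).2
  · exact fun i => hw0 _ (e i).2
  · rw [Equiv.sum_comp e (fun a : t => w a)]
    rw [← hw1]
    exact Finset.sum_coe_sort t w
  · rw [← hwc]
    rw [Equiv.sum_comp e (fun a : t => w a • (a : EuclideanSpace ℝ (Fin d)))]
    rw [Finset.sum_coe_sort t (fun y => w y • (y : EuclideanSpace ℝ (Fin d)))]
    simp
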